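/- Let Γ = A ≀ B with A, B finitely generated. For elements u_n = (1, b_n), v_n = (1, c_n) with b_n conjugate to c_n in B, every conjugator of u_n and v_n in Γ has the form (h, x) where x conjugates b_n to c_n in B and h satisfies h(g) = h(b_n^{-1}g) for all g ∈ B; moreover if b_n has infinite order then h must be the trivial function, so every conjugator is (1, x) with b_n x = x c_n. -/

import Mathlib

/-- Multiplication in the restricted wreath product `A ≀ B`:
`(f,b)(g,c) = (f · g^b, bc)` where `g^b (x) = g (b⁻¹ x)`. -/
def wmul {A B : Type*} [Group A] [Group B] (p q : (B → A) × B) : (B → A) × B :=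
  (fun x => p.1 x * q.1 (p.2⁻¹ * x), p.2 * q.2)

/-- In `Γ = A ≀ B`, every conjugator `(h, x)` of
`u = (1, bₙ)` and `v = (1, cₙ)` satisfies `bₙ x = x cₙ` and
`h(g) = h(bₙ⁻¹ g)` for all `g`; moreover if `bₙ` has infinite order then `h`
must be the trivial function, so every conjugator has the form `(1, x)` with
`bₙ x = x cₙ`. -/
theorem wreath_trivial_conjugators {A B : Type*} [Group A] [Group B]
    (b c : B) (h : B → A) (x : B)
    (hh : (Function.mulSupport h).Finite)
    (hconj : wmul ((fun _ => (1 : A)), b) (h, x) = wmul (h, x) ((fun _ => 1), c)) :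
    b * x = x * c ∧
    (∀ g : B, h g = h (b⁻¹ * g)) ∧
    ((∀ k : ℤ, b ^ k = 1 → k = 0) → ∀ g : B, h g = 1) := by
  have h1 := congrArg Prod.fst hconj
  have h2 := congrArg Prod.snd hconj
  simp only [wmul] at h1 h2
  have key : ∀ g : B, h g = h (b⁻¹ * g) := by
    intro g
    have := congrFun h1 g
    simpa using this.symm
  refine ⟨h2, key, ?_⟩
  intro hinf g
  by_contra hg
  -- h (b^k * g) = h g for all k : ℤ
  have step : ∀ w : B, h (b * w) = h w := by
    intro w
    have := key (b * w)
    rw [← mul_assoc, inv_mul_cancel, one_mul] at this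
    exact this
  have hk : ∀ k : ℤ, h (b ^ k * g) = h g := by
    intro k
    induction k using Int.induction_on with
    | zero => simp
    | succ n ih =>
        rw [show ((n:ℤ)+1) = 1+(n:ℤ) by ring, zpow_one_add, mul_assoc, step, ih]
    | pred n ih =>
        have : b ^ (-(n : ℤ)) * g = b * (b ^ (-(n:ℤ) - 1) * g) := by
          rw [← mul_assoc, ← zpow_one_add]; ring_nf
        rw [this, step] at ih
        exact ih
  have hinj : Function.Injective (fun k : ℤ => b ^ k * g) := by
    intro i j hij
    have hij' : b ^ i = b ^ j := mul_right_cancel hij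
    have : b ^ (i - j) = 1 := by
      rw [zpow_sub, hij', mul_inv_cancel]
    have := hinf _ this
    omega
  have hsub : Set.range (fun k : ℤ => b ^ k * g) ⊆ Function.mulSupport h := by
    rintro _ ⟨k, rfl⟩
    simp only [Function.mem_mulSupport]
    rw [hk k]; exact hg
  exact ((Set.infinite_range_of_injective hinj).mono hsub) hh
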